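/- Let θ ∈ ℝ and a, b ∈ ℝ with Λ ⊆ aℤ + b. Then there exist entire functions F, H, each a linear combination of at most two exponentials e^{ξz} with ξ ≠ 0, such that |F(z)| = |H(z)| for all z ∈ e^{iθ}(ℝ + iΛ), but F ≠ τH for every unimodular τ ∈ ℂ. -/

import Mathlib

open Complex

theorem phase_retrieval_necessity (θ a b : ℝ) (Λ : Set ℝ)
    (hΛ : Λ ⊆ {r : ℝ | ∃ n : ℤ, r = a * n + b}) :
    ∃ F H : ℂ → ℂ,
      (∃ c₁ c₂ ξ₁ ξ₂ : ℂ, ξ₁ ≠ 0 ∧ ξ₂ ≠ 0 ∧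
        (∀ z : ℂ, F z = c₁ * Complex.exp (ξ₁ * z) + c₂ * Complex.exp (ξ₂ * z)) ∧
        ∃ c₃ c₄ ξ₃ ξ₄ : ℂ, ξ₃ ≠ 0 ∧ ξ₄ ≠ 0 ∧
          ∀ z : ℂ, H z = c₃ * Complex.exp (ξ₃ * z) + c₄ * Complex.exp (ξ₄ * z)) ∧
      (∀ (t : ℝ), ∀ l ∈ Λ,
        ‖F (Complex.exp (Complex.I * θ) * ((t : ℂ) + Complex.I * l))‖
          = ‖H (Complex.exp (Complex.I * θ) * ((t : ℂ) + Complex.I * l))‖) ∧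
      ¬ ∃ τ : ℂ, ‖τ‖ = 1 ∧ ∀ z : ℂ, F z = τ * H z := by
  classical
  set k : ℝ := if a = 0 then 1 else Real.pi / a with hkdef
  set c₀ : ℝ := if a = 0 then b else Real.pi * b / a with hc0def
  have hk0 : k ≠ 0 := by
    by_cases ha : a = 0
    · simp [hkdef, ha]
    · simp only [hkdef, if_neg ha]
      exact div_ne_zero Real.pi_ne_zero ha
  have hkπ : ∀ l ∈ Λ, ∃ n : ℤ, c₀ - k * l = Real.pi * n := by
    intro l hl
    obtain ⟨n, hn⟩ := hΛ hl
    by_cases ha : a = 0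
    · exact ⟨0, by simp [hc0def, hkdef, ha, hn]⟩
    · refine ⟨-n, ?_⟩
      simp only [hc0def, hkdef, if_neg ha, hn]
      push_cast
      field_simp
      ring
  set ξ : ℂ := (k : ℂ) * Complex.exp (-(Complex.I * θ)) with hξdef
  have hξ0 : ξ ≠ 0 := mul_ne_zero (by exact_mod_cast hk0) (Complex.exp_ne_zero _)
  set c : ℂ := Complex.exp (Complex.I * c₀) with hcdef
  have hc0 : c ≠ 0 := Complex.exp_ne_zero _
  refine ⟨fun z => c * Complex.exp ((-ξ) * z) + (Complex.I * c⁻¹) * Complex.exp (ξ * z),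
      fun z => c * Complex.exp ((-ξ) * z) - (Complex.I * c⁻¹) * Complex.exp (ξ * z),
      ⟨c, Complex.I * c⁻¹, -ξ, ξ, neg_ne_zero.mpr hξ0, hξ0, fun z => rfl,
        c, -(Complex.I * c⁻¹), -ξ, ξ, neg_ne_zero.mpr hξ0, hξ0, fun z => by ring⟩,
      ?_, ?_⟩
  · -- modulus equality on the set
    intro t l hl
    obtain ⟨n, hn⟩ := hkπ l hl
    set z : ℂ := Complex.exp (Complex.I * θ) * ((t : ℂ) + Complex.I * l) with hzdef
    have hexp : Complex.exp (-(Complex.I * θ)) * Complex.exp (Complex.I * θ) = 1 := by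
      rw [← Complex.exp_add]; simp
    have hz : ξ * z = (k * t : ℝ) + Complex.I * (k * l : ℝ) := by
      rw [hzdef, hξdef]
      push_cast
      calc (k : ℂ) * Complex.exp (-(Complex.I * θ)) * (Complex.exp (Complex.I * θ) * ((t : ℂ) + Complex.I * l))
          = (k : ℂ) * ((t : ℂ) + Complex.I * l) *
              (Complex.exp (-(Complex.I * θ)) * Complex.exp (Complex.I * θ)) := by ring
        _ = (k : ℂ) * t + Complex.I * ((k : ℂ) * l) := by rw [hexp]; ring
    set m : ℂ := Complex.exp (Complex.I * (Real.pi * n)) with hmdef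
    have hm2 : m * m = 1 := by
      rw [hmdef, ← Complex.exp_add]
      have : Complex.I * (Real.pi * n) + Complex.I * (Real.pi * n) = (n : ℂ) * (2 * Real.pi * Complex.I) := by
        ring
      rw [this, Complex.exp_int_mul_two_pi_mul_I]
    have hminv : m⁻¹ = m := inv_eq_of_mul_eq_one_left hm2
    have hcast : (c₀ : ℂ) - ((k * l : ℝ) : ℂ) = ((Real.pi * n : ℝ) : ℂ) := by
      rw [← Complex.ofReal_sub, hn]
    have hu : c * Complex.exp ((-ξ) * z) = m * (Real.exp (-(k * t)) : ℝ) := by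
      rw [hcdef, show (-ξ) * z = -(ξ * z) by ring, hz, ← Complex.exp_add]
      have harg : Complex.I * (c₀ : ℂ) + -(((k * t : ℝ) : ℂ) + Complex.I * ((k * l : ℝ) : ℂ))
          = Complex.I * (Real.pi * n) + ((-(k * t) : ℝ) : ℂ) := by
        push_cast at hcast ⊢
        linear_combination Complex.I * hcast
      rw [harg, Complex.exp_add, ← hmdef, ← Complex.ofReal_exp]
    have hv : Complex.I * c⁻¹ * Complex.exp (ξ * z) = Complex.I * m * (Real.exp (k * t) : ℝ) := by
      rw [hcdef, ← Complex.exp_neg, hz, mul_assoc, ← Complex.exp_add]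
      have harg : -(Complex.I * (c₀ : ℂ)) + (((k * t : ℝ) : ℂ) + Complex.I * ((k * l : ℝ) : ℂ))
          = -(Complex.I * (Real.pi * n)) + ((k * t : ℝ) : ℂ) := by
        push_cast at hcast ⊢
        linear_combination (-Complex.I) * hcast
      rw [harg, Complex.exp_add, Complex.exp_neg, ← hmdef, hminv, ← Complex.ofReal_exp]
      ring
    beta_reduce
    rw [hu, hv]
    have h1 : m * (Real.exp (-(k * t)) : ℝ) + Complex.I * m * (Real.exp (k * t) : ℝ)
        = m * ((Real.exp (-(k * t)) : ℝ) + Complex.I * (Real.exp (k * t) : ℝ)) := by ring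
    have h2 : m * (Real.exp (-(k * t)) : ℝ) - Complex.I * m * (Real.exp (k * t) : ℝ)
        = m * ((Real.exp (-(k * t)) : ℝ) - Complex.I * (Real.exp (k * t) : ℝ)) := by ring
    rw [h1, h2, norm_mul, norm_mul]
    congr 1
    have hconj : ((Real.exp (-(k * t)) : ℝ) : ℂ) - Complex.I * (Real.exp (k * t) : ℝ)
        = (starRingEnd ℂ) (((Real.exp (-(k * t)) : ℝ) : ℂ) + Complex.I * (Real.exp (k * t) : ℝ)) := by
      rw [map_add, map_mul, Complex.conj_I, Complex.conj_ofReal, Complex.conj_ofReal]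
      ring
    rw [hconj, Complex.norm_conj]
  · -- no unimodular τ
    rintro ⟨τ, hτ, hfe⟩
    have h1 : c * Complex.exp ((-ξ) * 0) + Complex.I * c⁻¹ * Complex.exp (ξ * 0)
        = τ * (c * Complex.exp ((-ξ) * 0) - Complex.I * c⁻¹ * Complex.exp (ξ * 0)) := hfe 0
    simp only [mul_zero, Complex.exp_zero, mul_one] at h1
    set z₀ : ℂ := (Real.pi / 2 : ℝ) * Complex.I / ξ with hz0def
    have hξz₀ : ξ * z₀ = (Real.pi / 2 : ℝ) * Complex.I := by
      rw [hz0def]; field_simp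
    have he : Complex.exp (ξ * z₀) = Complex.I := by
      rw [hξz₀, Complex.exp_mul_I, ← Complex.ofReal_cos, ← Complex.ofReal_sin]
      simp [Real.cos_pi_div_two, Real.sin_pi_div_two]
    have he' : Complex.exp ((-ξ) * z₀) = -Complex.I := by
      rw [show (-ξ) * z₀ = -(ξ * z₀) by ring, Complex.exp_neg, he]
      simp [Complex.inv_I]
    have h2 : c * Complex.exp ((-ξ) * z₀) + Complex.I * c⁻¹ * Complex.exp (ξ * z₀)
        = τ * (c * Complex.exp ((-ξ) * z₀) - Complex.I * c⁻¹ * Complex.exp (ξ * z₀)) := hfe z₀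
    rw [he, he'] at h2
    have hI : (Complex.I : ℂ) ≠ 0 := Complex.I_ne_zero
    have hcinv : c⁻¹ ≠ 0 := inv_ne_zero hc0
    have h2' : -(Complex.I * c) - c⁻¹ = τ * (-(Complex.I * c) + c⁻¹) := by
      linear_combination h2 - (1 + τ) * c⁻¹ * Complex.I_mul_I
    have key1 : c * (1 - τ) = 0 := by
      linear_combination (h1 + Complex.I * h2') / 2 + ((1 - τ) * c / 2) * Complex.I_mul_I
    have key2 : Complex.I * c⁻¹ * (1 + τ) = 0 := by
      linear_combination (h1 - Complex.I * h2') / 2 - ((1 - τ) * c / 2) * Complex.I_mul_I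
    have hτ1 : τ = 1 := by
      rcases mul_eq_zero.mp key1 with h | h
      · exact absurd h hc0
      · exact (sub_eq_zero.mp h).symm
    have hτ2 : τ = -1 := by
      rcases mul_eq_zero.mp key2 with h | h
      · exact absurd h (mul_ne_zero hI hcinv)
      · exact eq_neg_of_add_eq_zero_right h
    rw [hτ1] at hτ2
    norm_num at hτ2
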